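/- Ando's inequality: if Φ : S^d_+ → S^{d'}_+ is a strictly positive linear map (maps positive definite matrices to positive definite matrices) and P, Q are positive definite d×d matrices, then Φ(P # Q) ⪯ Φ(P) # Φ(Q), where # denotes the matrix geometric mean. -/

import Mathlib

open Matrix

/-- Real power of a matrix via the spectral decomposition (defined for Hermitian input). -/
noncomputable def mpow {d : ℕ} (A : Matrix (Fin d) (Fin d) ℝ) (t : ℝ) : Matrix (Fin d) (Fin d) ℝ :=
  if hA : A.IsHermitian then
    (hA.eigenvectorUnitary : Matrix (Fin d) (Fin d) ℝ) *
      Matrix.diagonal (fun i => hA.eigenvalues i ^ t) *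
      star (hA.eigenvectorUnitary : Matrix (Fin d) (Fin d) ℝ)
  else A

/-- The geodesic `X #ₜ Y = X^{1/2} (X^{-1/2} Y X^{-1/2})^t X^{1/2}`. -/
noncomputable def geo {d : ℕ} (X Y : Matrix (Fin d) (Fin d) ℝ) (t : ℝ) : Matrix (Fin d) (Fin d) ℝ :=
  mpow X (1/2) * mpow (mpow X (-(1/2)) * Y * mpow X (-(1/2))) t * mpow X (1/2)

/-- The matrix geometric mean `X # Y`. -/
noncomputable def gmean {d : ℕ} (X Y : Matrix (Fin d) (Fin d) ℝ) : Matrix (Fin d) (Fin d) ℝ :=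
  geo X Y (1/2)


section Aux
variable {d : ℕ}

lemma posDef_conj {A B : Matrix (Fin d) (Fin d) ℝ} (hA : A.PosDef) (hB : IsUnit B) :
    (B * A * Bᴴ).PosDef := by
  refine Matrix.PosDef.of_dotProduct_mulVec_pos ?_ fun x hx => ?_
  · have h : Aᵀ = A := by simpa using hA.isHermitian.eq
    simp [Matrix.IsHermitian, conjTranspose_mul, Matrix.mul_assoc, h]
  · have h1 : star (Bᴴ *ᵥ x) ⬝ᵥ A *ᵥ (Bᴴ *ᵥ x) = star x ⬝ᵥ (B * A * Bᴴ) *ᵥ x := by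
      rw [star_mulVec, conjTranspose_conjTranspose, ← Matrix.dotProduct_mulVec,
        mulVec_mulVec, mulVec_mulVec, Matrix.mul_assoc]
    rw [← h1]
    refine hA.dotProduct_mulVec_pos fun hz => hx ?_
    have hinj : Function.Injective (Bᴴ.mulVec) :=
      Matrix.mulVec_injective_iff_isUnit.mpr ((isUnit_conjTranspose B).mpr hB)
    exact hinj (by simpa using hz)

lemma mpow_eq {A : Matrix (Fin d) (Fin d) ℝ} (hA : A.IsHermitian) (t : ℝ) :
    mpow A t = (hA.eigenvectorUnitary : Matrix (Fin d) (Fin d) ℝ) *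
      Matrix.diagonal (fun i => hA.eigenvalues i ^ t) *
      star (hA.eigenvectorUnitary : Matrix (Fin d) (Fin d) ℝ) := by
  rw [mpow, dif_pos hA]

lemma unitary_mul_star {A : Matrix (Fin d) (Fin d) ℝ} (hA : A.IsHermitian) :
    (hA.eigenvectorUnitary : Matrix (Fin d) (Fin d) ℝ) *
      star (hA.eigenvectorUnitary : Matrix (Fin d) (Fin d) ℝ) = 1 :=
  (Matrix.mem_unitaryGroup_iff).mp hA.eigenvectorUnitary.2

lemma star_mul_unitary {A : Matrix (Fin d) (Fin d) ℝ} (hA : A.IsHermitian) :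
    star (hA.eigenvectorUnitary : Matrix (Fin d) (Fin d) ℝ) *
      (hA.eigenvectorUnitary : Matrix (Fin d) (Fin d) ℝ) = 1 :=
  (Matrix.mem_unitaryGroup_iff').mp hA.eigenvectorUnitary.2

lemma isHermitian_conj {A B : Matrix (Fin d) (Fin d) ℝ} (hA : A.IsHermitian) :
    (B * A * Bᴴ).IsHermitian := by
  unfold Matrix.IsHermitian
  rw [conjTranspose_mul, conjTranspose_mul, conjTranspose_conjTranspose, hA.eq, Matrix.mul_assoc]

lemma mpow_isHermitian {A : Matrix (Fin d) (Fin d) ℝ} (hA : A.IsHermitian) (t : ℝ) :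
    (mpow A t).IsHermitian := by
  rw [mpow_eq hA t, Matrix.star_eq_conjTranspose]
  exact isHermitian_conj (isHermitian_diagonal _)

lemma mpow_posDef {A : Matrix (Fin d) (Fin d) ℝ} (hA : A.PosDef) (t : ℝ) :
    (mpow A t).PosDef := by
  rw [mpow_eq hA.isHermitian t]
  have hdiag : (Matrix.diagonal (fun i => hA.isHermitian.eigenvalues i ^ t)).PosDef := by
    rw [Matrix.posDef_diagonal_iff]
    exact fun i => Real.rpow_pos_of_pos (hA.eigenvalues_pos i) t
  have hU : IsUnit (hA.isHermitian.eigenvectorUnitary : Matrix (Fin d) (Fin d) ℝ) :=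
    ⟨⟨_, _, unitary_mul_star hA.isHermitian, star_mul_unitary hA.isHermitian⟩, rfl⟩
  simpa [Matrix.star_eq_conjTranspose] using posDef_conj hdiag hU

lemma mpow_mul_mpow {A : Matrix (Fin d) (Fin d) ℝ} (hA : A.PosDef) (s t : ℝ) :
    mpow A s * mpow A t = mpow A (s + t) := by
  rw [mpow_eq hA.isHermitian s, mpow_eq hA.isHermitian t, mpow_eq hA.isHermitian (s + t)]
  simp only [Matrix.mul_assoc]
  rw [← Matrix.mul_assoc (star (hA.isHermitian.eigenvectorUnitary : Matrix (Fin d) (Fin d) ℝ)),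
    star_mul_unitary hA.isHermitian, Matrix.one_mul,
    ← Matrix.mul_assoc (Matrix.diagonal _) (Matrix.diagonal _), diagonal_mul_diagonal]
  have hfun : (fun i => hA.isHermitian.eigenvalues i ^ s * hA.isHermitian.eigenvalues i ^ t)
      = fun i => hA.isHermitian.eigenvalues i ^ (s + t) :=
    funext fun i => (Real.rpow_add (hA.eigenvalues_pos i) s t).symm
  rw [hfun]

lemma mpow_one {A : Matrix (Fin d) (Fin d) ℝ} (hA : A.IsHermitian) :
    mpow A 1 = A := by
  rw [mpow_eq hA 1]
  simp only [Real.rpow_one]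
  exact (hA.spectral_theorem).symm

lemma mpow_zero {A : Matrix (Fin d) (Fin d) ℝ} (hA : A.IsHermitian) :
    mpow A 0 = 1 := by
  rw [mpow_eq hA 0]
  simp only [Real.rpow_zero]
  rw [diagonal_one, Matrix.mul_one, unitary_mul_star hA]

lemma smul_one_posDef {c : ℝ} (hc : 0 < c) : (c • (1 : Matrix (Fin d) (Fin d) ℝ)).PosDef := by
  rw [Matrix.smul_one_eq_diagonal]
  exact Matrix.PosDef.diagonal (fun _ => hc)

/-- a linear map sending PosDef to PosDef sends PosSemidef to PosSemidef -/
lemma map_posSemidef {d d' : ℕ} (Φ : Matrix (Fin d) (Fin d) ℝ →ₗ[ℝ] Matrix (Fin d') (Fin d') ℝ)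
    (hΦ : ∀ X : Matrix (Fin d) (Fin d) ℝ, X.PosDef → (Φ X).PosDef)
    {X : Matrix (Fin d) (Fin d) ℝ} (hX : X.PosSemidef) : (Φ X).PosSemidef := by
  have h1 : (Φ 1).PosDef := hΦ 1 Matrix.PosDef.one
  have hherm : (Φ X).IsHermitian := by
    have hd : Φ X = Φ (X + 1) - Φ 1 := by rw [map_add, add_sub_cancel_right]
    rw [hd]
    exact ((hΦ _ (Matrix.PosDef.posSemidef_add hX Matrix.PosDef.one)).isHermitian).sub h1.isHermitian
  refine Matrix.PosSemidef.of_dotProduct_mulVec_nonneg hherm fun x => ?_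
  rcases eq_or_ne x 0 with rfl | hx
  · simp
  · set a : ℝ := star x ⬝ᵥ (Φ X) *ᵥ x with ha
    set b : ℝ := star x ⬝ᵥ (Φ 1) *ᵥ x with hb
    have hbpos : 0 < b := h1.dotProduct_mulVec_pos hx
    have key : ∀ ε : ℝ, 0 < ε → 0 < a + ε * b := by
      intro ε hε
      have hXe : (X + ε • 1).PosDef := Matrix.PosDef.posSemidef_add hX (smul_one_posDef hε)
      have := (hΦ _ hXe).dotProduct_mulVec_pos hx
      rw [map_add, Φ.map_smul, add_mulVec, dotProduct_add, smul_mulVec,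
        dotProduct_smul] at this
      simpa [ha, hb, smul_eq_mul] using this
    by_contra hneg
    push_neg at hneg
    have hna : a < 0 := hneg
    have := key (-a / b) (div_pos (neg_pos.mpr hna) hbpos)
    rw [div_mul_cancel₀ _ hbpos.ne'] at this
    simp at this

lemma posSemidef_sum {n : ℕ} {ι : Type*} (s : Finset ι) (f : ι → Matrix (Fin n) (Fin n) ℝ)
    (h : ∀ i ∈ s, (f i).PosSemidef) : (∑ i ∈ s, f i).PosSemidef := by
  classical
  induction s using Finset.induction_on with
  | empty => simpa using Matrix.PosSemidef.zero
  | insert _ _ hnot ih =>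
    rw [Finset.sum_insert hnot]
    exact (h _ (Finset.mem_insert_self _ _)).add
      (ih fun i hi => h i (Finset.mem_insert_of_mem hi))

/-- monotonicity of the square root: if S, T are PSD (T posdef) and T² - S² is PSD
then T - S is PSD -/
lemma sub_posSemidef_of_sq {S T : Matrix (Fin d) (Fin d) ℝ}
    (hS : S.PosSemidef) (hT : T.PosDef) (h : (T * T - S * S).PosSemidef) :
    (T - S).PosSemidef := by
  have hR : (T - S).IsHermitian := hT.isHermitian.sub hS.isHermitian
  by_contra hc
  have : ¬ (∀ i, 0 ≤ hR.eigenvalues i) := fun hall => hc (hR.posSemidef_iff_eigenvalues_nonneg.mpr hall)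
  push_neg at this
  obtain ⟨i, hi⟩ := this
  set μ : ℝ := hR.eigenvalues i with hμ
  set v : Fin d → ℝ := ⇑(hR.eigenvectorBasis i) with hv
  have hvne : v ≠ 0 := by
    rw [hv]; exact fun h0 => hR.eigenvectorBasis.orthonormal.ne_zero i (by simpa using h0)
  have hev : (T - S) *ᵥ v = μ • v := hR.mulVec_eigenvectorBasis i
  have hTv : 0 < v ⬝ᵥ T *ᵥ v := by simpa [star_trivial] using hT.dotProduct_mulVec_pos hvne
  have hSv : 0 ≤ v ⬝ᵥ S *ᵥ v := by simpa [star_trivial] using hS.dotProduct_mulVec_nonneg v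
  have hquad : 0 ≤ v ⬝ᵥ (T * T - S * S) *ᵥ v := by simpa [star_trivial] using h.dotProduct_mulVec_nonneg v
  have hsplit : T * T - S * S = T * (T - S) + (T - S) * S := by noncomm_ring
  have hRT : (T - S)ᵀ = T - S := by simpa using hR.eq
  have e1 : v ⬝ᵥ (T * (T - S)) *ᵥ v = μ * (v ⬝ᵥ T *ᵥ v) := by
    rw [← mulVec_mulVec, hev, mulVec_smul, dotProduct_smul]
    rfl
  have e2 : v ⬝ᵥ ((T - S) * S) *ᵥ v = μ * (v ⬝ᵥ S *ᵥ v) := by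
    rw [← mulVec_mulVec, Matrix.dotProduct_mulVec, ← hRT, vecMul_transpose, hev,
      smul_dotProduct]
    rfl
  rw [hsplit, add_mulVec, dotProduct_add, e1, e2] at hquad
  nlinarith

lemma kadison {d d' : ℕ} (Ψ : Matrix (Fin d) (Fin d) ℝ →ₗ[ℝ] Matrix (Fin d') (Fin d') ℝ)
    (hpos : ∀ X : Matrix (Fin d) (Fin d) ℝ, X.PosSemidef → (Ψ X).PosSemidef)
    (hunital : Ψ 1 = 1)
    {A : Matrix (Fin d) (Fin d) ℝ} (hA : A.IsHermitian) :
    (Ψ (A * A) - Ψ A * Ψ A).PosSemidef := by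
  classical
  set U : Matrix (Fin d) (Fin d) ℝ := (hA.eigenvectorUnitary : Matrix (Fin d) (Fin d) ℝ) with hU
  set lam : Fin d → ℝ := hA.eigenvalues with hlam
  set E : Fin d → Matrix (Fin d) (Fin d) ℝ :=
    fun i => U * Matrix.diagonal (Pi.single i (1:ℝ)) * star U with hE
  have hdsum : ∀ (f : Fin d → ℝ),
      ∑ i, f i • Matrix.diagonal (Pi.single i (1:ℝ)) = Matrix.diagonal f := by
    intro f
    ext j k
    by_cases hjk : j = k
    · subst hjk
      simp [Matrix.sum_apply, Matrix.diagonal_apply, Pi.single_apply]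
    · simp [Matrix.sum_apply, Matrix.diagonal_apply, hjk]
  have hconj : ∀ (f : Fin d → ℝ),
      ∑ i, f i • E i = U * Matrix.diagonal f * star U := by
    intro f
    have : ∑ i, f i • E i
        = U * (∑ i, f i • Matrix.diagonal (Pi.single i (1:ℝ))) * star U := by
      rw [Finset.mul_sum, Finset.sum_mul]
      congr 1
      funext i
      simp [hE, mul_smul_comm, smul_mul_assoc]
    rw [this, hdsum]
  have hAd : A = U * Matrix.diagonal lam * star U := by
    have := hA.spectral_theorem
    simpa [Function.comp] using this
  have hAeq : A = ∑ i, lam i • E i := by rw [hconj lam, ← hAd]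
  have hA2eq : A * A = ∑ i, (lam i * lam i) • E i := by
    rw [hconj fun i => lam i * lam i]
    rw [hAd]
    simp only [Matrix.mul_assoc]
    rw [← Matrix.mul_assoc (star U) U, star_mul_unitary hA, Matrix.one_mul,
      ← Matrix.mul_assoc (Matrix.diagonal lam) (Matrix.diagonal lam), diagonal_mul_diagonal]
  have hEpsd : ∀ i, (E i).PosSemidef := by
    intro i
    have hdpsd : (Matrix.diagonal (Pi.single i (1:ℝ))).PosSemidef := by
      refine posSemidef_diagonal_iff.mpr fun j => ?_
      by_cases h : i = j <;> simp [Pi.single_apply, h]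
    have := hdpsd.mul_mul_conjTranspose_same U
    simpa [hE, Matrix.star_eq_conjTranspose, Matrix.mul_assoc] using this
  set X : Matrix (Fin d') (Fin d') ℝ := Ψ A with hX
  set Q : Fin d → Matrix (Fin d') (Fin d') ℝ := fun i => Ψ (E i) with hQ
  have hQpsd : ∀ i, (Q i).PosSemidef := fun i => hpos _ (hEpsd i)
  have hQsum : ∑ i, Q i = 1 := by
    have h1 : ∑ i, E i = 1 := by
      have := hconj (fun _ => (1:ℝ))
      have h2 : U * star U = 1 := unitary_mul_star hA
      simpa [diagonal_one, h2] using this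
    rw [hQ]
    rw [← map_sum, h1, hunital]
  have hXeq : X = ∑ i, lam i • Q i := by
    rw [hX, hAeq, map_sum]
    simp [hQ]
  have hX2eq : Ψ (A * A) = ∑ i, (lam i * lam i) • Q i := by
    rw [hA2eq, map_sum]
    simp [hQ]
  have hXherm : X.IsHermitian := by
    have hq : ∀ i, (Q i)ᵀ = Q i := fun i => by simpa using (hQpsd i).1.eq
    rw [hXeq]
    simp [Matrix.IsHermitian, Matrix.conjTranspose_sum, Matrix.conjTranspose_smul,
      Matrix.transpose_sum, Matrix.transpose_smul, hq]
  have expand : ∀ i, (lam i • 1 - X) * Q i * (lam i • 1 - X)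
      = ((lam i * lam i) • Q i - lam i • (X * Q i)) - (lam i • (Q i * X) - X * (Q i * X)) := by
    intro i
    simp only [sub_mul, mul_sub, smul_mul_assoc, mul_smul_comm, one_mul, mul_one, smul_smul,
      smul_sub, Matrix.mul_assoc]
  have key : Ψ (A * A) - X * X = ∑ i, (lam i • 1 - X) * Q i * (lam i • 1 - X) := by
    have e1 : ∑ i, lam i • (X * Q i) = X * X := by
      rw [show ∑ i, lam i • (X * Q i) = X * ∑ i, lam i • Q i by
        rw [Finset.mul_sum]; congr 1; funext i; rw [mul_smul_comm], ← hXeq]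
    have e2 : ∑ i, lam i • (Q i * X) = X * X := by
      rw [show ∑ i, lam i • (Q i * X) = (∑ i, lam i • Q i) * X by
        rw [Finset.sum_mul]; congr 1; funext i; rw [smul_mul_assoc], ← hXeq]
    have e3 : ∑ i, X * (Q i * X) = X * X := by
      rw [← Finset.mul_sum, ← Finset.sum_mul, hQsum, Matrix.one_mul]
    calc Ψ (A * A) - X * X
        = (∑ i, (lam i * lam i) • Q i - ∑ i, lam i • (X * Q i))
          - (∑ i, lam i • (Q i * X) - ∑ i, X * (Q i * X)) := by
          rw [hX2eq, e1, e2, e3]; abel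
      _ = ∑ i, (((lam i * lam i) • Q i - lam i • (X * Q i))
            - (lam i • (Q i * X) - X * (Q i * X))) := by
          rw [← Finset.sum_sub_distrib, ← Finset.sum_sub_distrib, ← Finset.sum_sub_distrib]
      _ = ∑ i, (lam i • 1 - X) * Q i * (lam i • 1 - X) :=
          Finset.sum_congr rfl fun i _ => (expand i).symm
  rw [key]
  refine posSemidef_sum _ _ fun i _ => ?_
  have hBh : (lam i • (1:Matrix (Fin d') (Fin d') ℝ) - X)ᴴ = lam i • 1 - X := by
    rw [conjTranspose_sub, conjTranspose_smul, conjTranspose_one, hXherm.eq, star_trivial]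
  have := (hQpsd i).mul_mul_conjTranspose_same (lam i • 1 - X)
  rwa [hBh] at this


end Aux

theorem stmt5 {d d' : ℕ}
    (Φ : Matrix (Fin d) (Fin d) ℝ →ₗ[ℝ] Matrix (Fin d') (Fin d') ℝ)
    (hΦ : ∀ X : Matrix (Fin d) (Fin d) ℝ, X.PosDef → (Φ X).PosDef)
    (P Q : Matrix (Fin d) (Fin d) ℝ) (hP : P.PosDef) (hQ : Q.PosDef) :
    (gmean (Φ P) (Φ Q) - Φ (gmean P Q)).PosSemidef := by
  have hC : (Φ P).PosDef := hΦ P hP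
  have hD : (Φ Q).PosDef := hΦ Q hQ
  simp only [gmean, geo]
  set C : Matrix (Fin d') (Fin d') ℝ := Φ P with hCdef
  set Dm : Matrix (Fin d') (Fin d') ℝ := Φ Q with hDdef
  -- powers of P and C
  have hPp : (mpow P (1/2)).PosDef := mpow_posDef hP _
  have hPm : (mpow P (-(1/2))).PosDef := mpow_posDef hP _
  have hCp : (mpow C (1/2)).PosDef := mpow_posDef hC _
  have hCm : (mpow C (-(1/2))).PosDef := mpow_posDef hC _
  set Pp := mpow P (1/2) with hPpdef
  set Pm := mpow P (-(1/2)) with hPmdef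
  set Cp := mpow C (1/2) with hCpdef
  set Cm := mpow C (-(1/2)) with hCmdef
  have hPpPp : Pp * Pp = P := by
    rw [hPpdef, mpow_mul_mpow hP]
    norm_num
    exact mpow_one hP.isHermitian
  have hCpCp : Cp * Cp = C := by
    rw [hCpdef, mpow_mul_mpow hC]
    norm_num
    exact mpow_one hC.isHermitian
  have hPpPm : Pp * Pm = 1 := by
    rw [hPpdef, hPmdef, mpow_mul_mpow hP]
    norm_num
    exact mpow_zero hP.isHermitian
  have hPmPp : Pm * Pp = 1 := by
    rw [hPpdef, hPmdef, mpow_mul_mpow hP]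
    norm_num
    exact mpow_zero hP.isHermitian
  have hCpCm : Cp * Cm = 1 := by
    rw [hCpdef, hCmdef, mpow_mul_mpow hC]
    norm_num
    exact mpow_zero hC.isHermitian
  have hCmCp : Cm * Cp = 1 := by
    rw [hCpdef, hCmdef, mpow_mul_mpow hC]
    norm_num
    exact mpow_zero hC.isHermitian
  -- the inner matrices
  set M := Pm * Q * Pm with hMdef
  set N := Cm * Dm * Cm with hNdef
  have hM : M.PosDef := by
    have := posDef_conj hQ hPm.isUnit
    rwa [hPm.isHermitian.eq] at this
  have hN : N.PosDef := by
    have := posDef_conj hD hCm.isUnit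
    rwa [hCm.isHermitian.eq] at this
  have hR : (mpow M (1/2)).PosDef := mpow_posDef hM _
  have hT : (mpow N (1/2)).PosDef := mpow_posDef hN _
  set R := mpow M (1/2) with hRdef
  set T := mpow N (1/2) with hTdef
  have hRR : R * R = M := by
    rw [hRdef, mpow_mul_mpow hM]
    norm_num
    exact mpow_one hM.isHermitian
  have hTT : T * T = N := by
    rw [hTdef, mpow_mul_mpow hN]
    norm_num
    exact mpow_one hN.isHermitian
  -- the rescaled map Ψ
  set Ψ : Matrix (Fin d) (Fin d) ℝ →ₗ[ℝ] Matrix (Fin d') (Fin d') ℝ :=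
    { toFun := fun X => Cm * Φ (Pp * X * Pp) * Cm
      map_add' := fun X Y => by
        simp [Matrix.mul_add, Matrix.add_mul, map_add]
      map_smul' := fun c X => by
        simp [mul_smul_comm, smul_mul_assoc, _root_.map_smul] } with hΨdef
  have hΨapp : ∀ X, Ψ X = Cm * Φ (Pp * X * Pp) * Cm := fun X => rfl
  have hΨpos : ∀ X : Matrix (Fin d) (Fin d) ℝ, X.PosSemidef → (Ψ X).PosSemidef := by
    intro X hX
    rw [hΨapp]
    have h1 : (Pp * X * Pp).PosSemidef := by
      have := hX.mul_mul_conjTranspose_same Pp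
      rwa [hPp.isHermitian.eq] at this
    have h2 := map_posSemidef Φ hΦ h1
    have := h2.mul_mul_conjTranspose_same Cm
    rwa [hCm.isHermitian.eq] at this
  have hΨ1 : Ψ 1 = 1 := by
    rw [hΨapp, Matrix.mul_one, hPpPp, ← hCdef, ← hCpCp, ← Matrix.mul_assoc,
      Matrix.mul_assoc Cm Cp Cp, ← Matrix.mul_assoc Cm Cp, hCmCp, Matrix.one_mul, hCpCm]
  -- Kadison's inequality applied to R
  have kres := kadison Ψ hΨpos hΨ1 hR.isHermitian
  have hPpMPp : Pp * M * Pp = Q := by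
    rw [hMdef]
    simp only [Matrix.mul_assoc]
    rw [hPmPp, Matrix.mul_one, ← Matrix.mul_assoc, hPpPm, Matrix.one_mul]
  have hΨRR : Ψ (R * R) = N := by
    rw [hRR, hΨapp, hPpMPp, ← hDdef, hNdef]
  set S := Ψ R with hSdef
  have hSpsd : S.PosSemidef := hΨpos R hR.posSemidef
  rw [hΨRR] at kres
  rw [← hTT] at kres
  have hTS : (T - S).PosSemidef := sub_posSemidef_of_sq hSpsd hT kres
  -- reassemble
  have hΦG : Φ (Pp * R * Pp) = Cp * S * Cp := by
    have e : Cp * (Cm * Φ (Pp * R * Pp) * Cm) * Cp = Φ (Pp * R * Pp) := by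
      simp only [Matrix.mul_assoc]
      rw [hCmCp, Matrix.mul_one, ← Matrix.mul_assoc, hCpCm, Matrix.one_mul]
    rw [hSdef, hΨapp, e]
  have hgoal : Cp * T * Cp - Φ (Pp * R * Pp) = Cp * (T - S) * Cp := by
    rw [hΦG, Matrix.mul_sub, Matrix.sub_mul]
  rw [hgoal]
  have := hTS.mul_mul_conjTranspose_same Cp
  rwa [hCp.isHermitian.eq] at this
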